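/- Let σ be a permutation of {1, …, n} and let x_σ ∈ GL_n(ℚ_p) be the corresponding permutation matrix. Then x_σ satisfies the three conditions (a) x_σ^{−1}·(L(ℚ_p) ∩ B(ℚ_p))·x_σ ⊆ B(ℚ_p), (b) x_σ·(L(ℚ_p) ∩ B(ℚ_p))·x_σ^{−1} ⊆ B(ℚ_p), and (c) x_σ·L(ℚ_p)·x_σ^{−1} = L(ℚ_p), if and only if there exists a permutation ρ of {1, …, t} with n_{ρ(j)} = n_j for all j such that σ maps each block interval {D(j−1)+1, …, D(j)} onto the block interval {D(ρ(j)−1)+1, …, D(ρ(j))} in an order-preserving way, i.e., σ(D(j−1)+k) = D(ρ(j)−1)+k for all 1 ≤ k ≤ n_j. (These are the elements of the set W(L,L) of the relative Weyl group; in other words, W(L,L) consists exactly of the permutations of the GL_{n_k}-blocks of L of the same size.) -/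

import Mathlib

/-!
STATEMENT 10: Let σ be a permutation of {1, …, n} and x_σ ∈ GL_n(ℚ_p) the corresponding
permutation matrix. Then x_σ satisfies
 (a) x_σ⁻¹·(L(ℚ_p) ∩ B(ℚ_p))·x_σ ⊆ B(ℚ_p),
 (b) x_σ·(L(ℚ_p) ∩ B(ℚ_p))·x_σ⁻¹ ⊆ B(ℚ_p),
 (c) x_σ·L(ℚ_p)·x_σ⁻¹ = L(ℚ_p),
if and only if there exists a permutation ρ of {1, …, t} with n_{ρ(j)} = n_j for all j
such that σ maps each block interval onto the block interval of ρ(j) in an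
order-preserving way: σ(D(j−1)+k) = D(ρ(j)−1)+k for all 1 ≤ k ≤ n_j.
-/

open Matrix

noncomputable section
namespace PIw

/-- Partial sums of the partition: `Dsum nn j = n_1 + ⋯ + n_j` (`nn` is 0-indexed). -/
def Dsum {t : ℕ} (nn : Fin t → ℕ) (j : ℕ) : ℕ :=
  ∑ i ∈ Finset.range j, if h : i < t then nn ⟨i, h⟩ else 0

lemma Dsum_mono {t : ℕ} (nn : Fin t → ℕ) {a b : ℕ} (h : a ≤ b) :
    Dsum nn a ≤ Dsum nn b :=
  Finset.sum_le_sum_of_subset (Finset.range_subset_range.mpr h)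

lemma Dsum_succ {t : ℕ} (nn : Fin t → ℕ) (j : Fin t) :
    Dsum nn ((j : ℕ) + 1) = Dsum nn (j : ℕ) + nn j := by
  unfold Dsum
  rw [Finset.sum_range_succ]
  simp [j.isLt]

/-- Index (0-indexed) of the block containing position `k`. -/
def blkOf {t : ℕ} (nn : Fin t → ℕ) (k : ℕ) : ℕ :=
  ((Finset.range t).filter fun j => Dsum nn (j + 1) ≤ k).card

/-- The block function on `Fin n`. -/
def bfun {t : ℕ} (nn : Fin t → ℕ) : Fin (Dsum nn t) → ℕ := fun k => blkOf nn (k : ℕ)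

/-- Embedding of the index set of the `j`-th diagonal block into `Fin n`. -/
def blockEmb {t : ℕ} (nn : Fin t → ℕ) (j : Fin t) (k : Fin (nn j)) :
    Fin (Dsum nn t) :=
  ⟨Dsum nn (j : ℕ) + (k : ℕ), by
    have h1 := Dsum_succ nn j
    have h2 : Dsum nn ((j : ℕ) + 1) ≤ Dsum nn t := Dsum_mono nn j.isLt
    have h3 : (k : ℕ) < nn j := k.isLt
    omega⟩

variable (p : ℕ) [Fact p.Prime]

/-- Upper triangular matrices. -/
def IsUpper {N : ℕ} (M : Matrix (Fin N) (Fin N) ℚ_[p]) : Prop :=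
  ∀ k l : Fin N, l < k → M k l = 0

/-- Block diagonal matrices (for the given partition). -/
def IsBlockDiag {t : ℕ} (nn : Fin t → ℕ)
    (M : Matrix (Fin (Dsum nn t)) (Fin (Dsum nn t)) ℚ_[p]) : Prop :=
  ∀ k l, bfun nn k ≠ bfun nn l → M k l = 0

/-- Membership in the Borel subgroup `B(ℚ_p)` of invertible upper-triangular matrices. -/
def memB {N : ℕ} (M : Matrix (Fin N) (Fin N) ℚ_[p]) : Prop :=
  IsUnit M ∧ IsUpper p M

/-- Membership in the Levi subgroup `L(ℚ_p)` of invertible block-diagonal matrices. -/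
def memL {t : ℕ} (nn : Fin t → ℕ)
    (M : Matrix (Fin (Dsum nn t)) (Fin (Dsum nn t)) ℚ_[p]) : Prop :=
  IsUnit M ∧ IsBlockDiag p nn M

/-- Membership in `L(ℚ_p) ∩ B(ℚ_p)`. -/
def memLB {t : ℕ} (nn : Fin t → ℕ)
    (M : Matrix (Fin (Dsum nn t)) (Fin (Dsum nn t)) ℚ_[p]) : Prop :=
  IsUnit M ∧ IsBlockDiag p nn M ∧ IsUpper p M

/-- The permutation matrix `x_σ` (with `(x_σ)_{σ(l), l} = 1`). -/
def permMat {N : ℕ} (σ : Equiv.Perm (Fin N)) : Matrix (Fin N) (Fin N) ℚ_[p] :=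
  fun k l => if σ l = k then 1 else 0

/-- The inverse permutation matrix `x_σ⁻¹ = x_{σ⁻¹}`. -/
def permMatInv {N : ℕ} (σ : Equiv.Perm (Fin N)) : Matrix (Fin N) (Fin N) ℚ_[p] :=
  fun k l => if σ k = l then 1 else 0

/-! ### Auxiliary lemmas -/

section Aux


lemma permMat_mul_apply {N : ℕ} (σ : Equiv.Perm (Fin N)) (M : Matrix (Fin N) (Fin N) ℚ_[p])
    (k l : Fin N) : (permMat p σ * M) k l = M (σ.symm k) l := by
  rw [Matrix.mul_apply, Finset.sum_eq_single (σ.symm k)]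
  · simp [permMat]
  · intro m _ hm
    have : σ m ≠ k := fun h => hm (by rw [← h]; simp)
    simp [permMat, this]
  · simp

lemma mul_permMat_apply {N : ℕ} (σ : Equiv.Perm (Fin N)) (M : Matrix (Fin N) (Fin N) ℚ_[p])
    (k l : Fin N) : (M * permMat p σ) k l = M k (σ l) := by
  rw [Matrix.mul_apply, Finset.sum_eq_single (σ l)]
  · simp [permMat]
  · intro m _ hm
    simp [permMat, Ne.symm hm]
  · simp

lemma permMatInv_mul_apply {N : ℕ} (σ : Equiv.Perm (Fin N)) (M : Matrix (Fin N) (Fin N) ℚ_[p])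
    (k l : Fin N) : (permMatInv p σ * M) k l = M (σ k) l := by
  rw [Matrix.mul_apply, Finset.sum_eq_single (σ k)]
  · simp [permMatInv]
  · intro m _ hm
    simp [permMatInv, Ne.symm hm]
  · simp

lemma mul_permMatInv_apply {N : ℕ} (σ : Equiv.Perm (Fin N)) (M : Matrix (Fin N) (Fin N) ℚ_[p])
    (k l : Fin N) : (M * permMatInv p σ) k l = M k (σ.symm l) := by
  rw [Matrix.mul_apply, Finset.sum_eq_single (σ.symm l)]
  · simp [permMatInv]
  · intro m _ hm
    have : σ m ≠ l := fun h => hm (by rw [← h]; simp)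
    simp [permMatInv, this]
  · simp

lemma conj_apply {N : ℕ} (σ : Equiv.Perm (Fin N)) (M : Matrix (Fin N) (Fin N) ℚ_[p])
    (k l : Fin N) : (permMat p σ * M * permMatInv p σ) k l = M (σ.symm k) (σ.symm l) := by
  rw [mul_permMatInv_apply, permMat_mul_apply]

lemma conjInv_apply {N : ℕ} (σ : Equiv.Perm (Fin N)) (M : Matrix (Fin N) (Fin N) ℚ_[p])
    (k l : Fin N) : (permMatInv p σ * M * permMat p σ) k l = M (σ k) (σ l) := by
  rw [mul_permMat_apply, permMatInv_mul_apply]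

lemma permMat_mul_permMatInv {N : ℕ} (σ : Equiv.Perm (Fin N)) :
    permMat p σ * permMatInv p σ = 1 := by
  ext k l
  rw [mul_permMatInv_apply]
  simp only [permMat, Matrix.one_apply]
  by_cases h : k = l <;> simp [h, Equiv.apply_eq_iff_eq_symm_apply, Ne.symm]

lemma permMatInv_mul_permMat {N : ℕ} (σ : Equiv.Perm (Fin N)) :
    permMatInv p σ * permMat p σ = 1 := by
  ext k l
  rw [mul_permMat_apply]
  simp only [permMatInv, Matrix.one_apply]
  by_cases h : k = l <;> simp [h]

lemma isUnit_permMat {N : ℕ} (σ : Equiv.Perm (Fin N)) : IsUnit (permMat p σ) :=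
  ⟨⟨permMat p σ, permMatInv p σ, permMat_mul_permMatInv p σ, permMatInv_mul_permMat p σ⟩, rfl⟩

lemma isUnit_permMatInv {N : ℕ} (σ : Equiv.Perm (Fin N)) : IsUnit (permMatInv p σ) :=
  ⟨⟨permMatInv p σ, permMat p σ, permMatInv_mul_permMat p σ, permMat_mul_permMatInv p σ⟩, rfl⟩

lemma one_add_std_apply_same {N : ℕ} (a b : Fin N) (hab : a ≠ b) :
    (1 + Matrix.single a b (1:ℚ_[p])) a b = 1 := by
  rw [Matrix.add_apply, Matrix.one_apply_ne hab, Matrix.single_apply_same, zero_add]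

lemma one_add_std_apply_ne {N : ℕ} (a b k l : Fin N) (hkl : k ≠ l) (h : ¬(k = a ∧ l = b)) :
    (1 + Matrix.single a b (1:ℚ_[p])) k l = 0 := by
  rw [Matrix.add_apply, Matrix.one_apply_ne hkl, Matrix.single_apply_of_ne, add_zero]
  tauto

lemma isUnit_one_add_std {N : ℕ} (a b : Fin N) (hab : a ≠ b) :
    IsUnit (1 + Matrix.single a b (1:ℚ_[p])) := by
  have h0 : Matrix.single a b (1:ℚ_[p]) * Matrix.single a b 1 = 0 :=
    Matrix.single_mul_single_of_ne 1 a b a (Ne.symm hab) 1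
  have h1 : (1 + Matrix.single a b (1:ℚ_[p])) * (1 - Matrix.single a b 1) = 1 := by
    rw [mul_sub, add_mul, add_mul, h0]; noncomm_ring
  have h2 : (1 - Matrix.single a b (1:ℚ_[p])) * (1 + Matrix.single a b 1) = 1 := by
    rw [mul_add, sub_mul, sub_mul, h0]; noncomm_ring
  exact ⟨⟨_, _, h1, h2⟩, rfl⟩

lemma memL_one_add {t : ℕ} (nn : Fin t → ℕ) (a b : Fin (Dsum nn t)) (hab : a ≠ b)
    (hblk : bfun nn a = bfun nn b) : memL p nn (1 + Matrix.single a b (1:ℚ_[p])) := by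
  refine ⟨isUnit_one_add_std p a b hab, fun k l h => ?_⟩
  have hkl : k ≠ l := fun he => h (by rw [he])
  refine one_add_std_apply_ne p a b k l hkl ?_
  rintro ⟨rfl, rfl⟩; exact h hblk

lemma memLB_one_add {t : ℕ} (nn : Fin t → ℕ) (a b : Fin (Dsum nn t)) (hab : a < b)
    (hblk : bfun nn a = bfun nn b) : memLB p nn (1 + Matrix.single a b (1:ℚ_[p])) := by
  have hne : a ≠ b := ne_of_lt hab
  refine ⟨isUnit_one_add_std p a b hne, (memL_one_add p nn a b hne hblk).2, fun k l hlk => ?_⟩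
  have hkl : k ≠ l := (ne_of_lt hlk).symm
  refine one_add_std_apply_ne p a b k l hkl ?_
  rintro ⟨rfl, rfl⟩; exact absurd hab (not_lt.mpr hlk.le)

/-! Block combinatorics -/

lemma blkOf_add {t : ℕ} (nn : Fin t → ℕ) (j : Fin t) (k : ℕ) (hk : k < nn j) :
    blkOf nn (Dsum nn (j : ℕ) + k) = (j : ℕ) := by
  unfold blkOf
  have : (Finset.range t).filter (fun i => Dsum nn (i + 1) ≤ Dsum nn (j : ℕ) + k)
      = Finset.range (j : ℕ) := by
    ext i
    simp only [Finset.mem_filter, Finset.mem_range]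
    constructor
    · rintro ⟨hit, hle⟩
      by_contra hji
      push_neg at hji
      have h1 : Dsum nn ((j : ℕ) + 1) ≤ Dsum nn (i + 1) := Dsum_mono nn (by omega)
      have h2 := Dsum_succ nn j
      omega
    · intro hij
      refine ⟨by omega, ?_⟩
      have h1 : Dsum nn (i + 1) ≤ Dsum nn (j : ℕ) := Dsum_mono nn (by omega)
      omega
  rw [this, Finset.card_range]

lemma bfun_blockEmb {t : ℕ} (nn : Fin t → ℕ) (j : Fin t) (k : Fin (nn j)) :
    bfun nn (blockEmb nn j k) = (j : ℕ) :=
  blkOf_add nn j (k : ℕ) k.isLt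

lemma exists_decomp_aux {t : ℕ} (nn : Fin t → ℕ) (J : ℕ) (hJ : J ≤ t) :
    ∀ m, m < Dsum nn J → ∃ j : Fin t, ∃ k : ℕ, k < nn j ∧ m = Dsum nn (j : ℕ) + k := by
  induction J with
  | zero => intro m hm; simp [Dsum] at hm
  | succ J ih =>
    intro m hm
    have hJt : J < t := hJ
    have hs := Dsum_succ nn ⟨J, hJt⟩
    simp only at hs
    by_cases h : m < Dsum nn J
    · exact ih (le_of_lt hJt) m h
    · exact ⟨⟨J, hJt⟩, m - Dsum nn J, by omega, by simp; omega⟩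

lemma exists_decomp {t : ℕ} (nn : Fin t → ℕ) (m : Fin (Dsum nn t)) :
    ∃ j : Fin t, ∃ k : Fin (nn j), m = blockEmb nn j k := by
  obtain ⟨j, k, hk, he⟩ := exists_decomp_aux nn t le_rfl (m : ℕ) m.isLt
  exact ⟨j, ⟨k, hk⟩, Fin.ext he⟩

/-! Strict monotone arithmetic -/

lemma strictmono_step (m : ℕ) (g : ℕ → ℕ) (hmono : ∀ k l, k < l → l < m → g k < g l) :
    ∀ d k, k + d < m → g k + d ≤ g (k + d) := by
  intro d
  induction d with
  | zero => intro k _; simp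
  | succ d ih =>
    intro k h
    have h1 := ih k (by omega)
    have h2 := hmono (k + d) (k + d + 1) (by omega) (by omega)
    have : k + (d + 1) = k + d + 1 := by omega
    rw [this]; omega

lemma size_le_of_strict {m B A : ℕ} (hm : 0 < m) (g : ℕ → ℕ)
    (hmono : ∀ k l, k < l → l < m → g k < g l)
    (hlow : ∀ k, k < m → A ≤ g k) (hhigh : ∀ k, k < m → g k < A + B) : m ≤ B := by
  have h0 := strictmono_step m g hmono (m - 1) 0 (by omega)
  have h1 := hlow 0 hm
  have h2 := hhigh (m - 1) (by omega)
  simp only [Nat.zero_add] at h0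
  omega

lemma strict_interval {m A : ℕ} (g : ℕ → ℕ)
    (hmono : ∀ k l, k < l → l < m → g k < g l)
    (hlow : ∀ k, k < m → A ≤ g k) (hhigh : ∀ k, k < m → g k < A + m) :
    ∀ k, k < m → g k = A + k := by
  intro k hk
  have h1 := strictmono_step m g hmono k 0 (by omega)
  have h2 := strictmono_step m g hmono (m - 1 - k) k (by omega)
  have h3 := hlow 0 (by omega)
  have h4 := hhigh (m - 1) (by omega)
  have h5 := hhigh k hk
  have he : k + (m - 1 - k) = m - 1 := by omega
  rw [he] at h2
  simp only [Nat.zero_add] at h1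
  omega

end Aux

section Cond

variable {t : ℕ} {nn : Fin t → ℕ} {σ : Equiv.Perm (Fin (Dsum nn t))} {ρ : Equiv.Perm (Fin t)}

lemma cond_bfun (hsz : ∀ j, nn (ρ j) = nn j)
    (hmap : ∀ (j : Fin t) (k : Fin (nn j)),
      ((σ (blockEmb nn j k) : ℕ)) = Dsum nn ((ρ j : Fin t) : ℕ) + (k : ℕ)) :
    ∀ (j : Fin t) (k : Fin (nn j)), bfun nn (σ (blockEmb nn j k)) = ((ρ j : Fin t) : ℕ) := by
  intro j k
  have he : σ (blockEmb nn j k) = blockEmb nn (ρ j) ⟨(k : ℕ), by rw [hsz]; exact k.isLt⟩ :=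
    Fin.ext (by simpa [blockEmb] using hmap j k)
  rw [he, bfun_blockEmb]

lemma cond_mono
    (hmap : ∀ (j : Fin t) (k : Fin (nn j)),
      ((σ (blockEmb nn j k) : ℕ)) = Dsum nn ((ρ j : Fin t) : ℕ) + (k : ℕ)) :
    ∀ a b : Fin (Dsum nn t), bfun nn a = bfun nn b → a < b → σ a < σ b := by
  intro a b hblk hab
  obtain ⟨j, k, rfl⟩ := exists_decomp nn a
  obtain ⟨j', k', rfl⟩ := exists_decomp nn b
  rw [bfun_blockEmb, bfun_blockEmb] at hblk
  have hj : j = j' := Fin.ext hblk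
  subst hj
  have hkk : (k : ℕ) < (k' : ℕ) := by
    rw [Fin.lt_def] at hab
    simpa [blockEmb] using hab
  have h1 := hmap j k
  have h2 := hmap j k'
  rw [Fin.lt_def]
  omega

lemma cond_pres (hsz : ∀ j, nn (ρ j) = nn j)
    (hmap : ∀ (j : Fin t) (k : Fin (nn j)),
      ((σ (blockEmb nn j k) : ℕ)) = Dsum nn ((ρ j : Fin t) : ℕ) + (k : ℕ)) :
    ∀ a b : Fin (Dsum nn t), bfun nn a = bfun nn b → bfun nn (σ a) = bfun nn (σ b) := by
  intro a b h
  obtain ⟨j, k, rfl⟩ := exists_decomp nn a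
  obtain ⟨j', k', rfl⟩ := exists_decomp nn b
  rw [bfun_blockEmb, bfun_blockEmb] at h
  have hj : j = j' := Fin.ext h
  subst hj
  rw [cond_bfun hsz hmap, cond_bfun hsz hmap]

lemma cond_symm (hsz : ∀ j, nn (ρ j) = nn j)
    (hmap : ∀ (j : Fin t) (k : Fin (nn j)),
      ((σ (blockEmb nn j k) : ℕ)) = Dsum nn ((ρ j : Fin t) : ℕ) + (k : ℕ)) :
    (∀ j, nn (ρ.symm j) = nn j) ∧
    ∀ (j : Fin t) (k : Fin (nn j)),
      ((σ.symm (blockEmb nn j k) : ℕ)) = Dsum nn ((ρ.symm j : Fin t) : ℕ) + (k : ℕ) := by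
  have hsz' : ∀ j, nn (ρ.symm j) = nn j := by
    intro j
    have := hsz (ρ.symm j)
    rw [Equiv.apply_symm_apply] at this; exact this.symm
  refine ⟨hsz', fun j k => ?_⟩
  have hk' : (k : ℕ) < nn (ρ.symm j) := by rw [hsz']; exact k.isLt
  have h1 := Fin.ext (a := σ (blockEmb nn (ρ.symm j) ⟨(k : ℕ), hk'⟩))
      (b := blockEmb nn j k) (by
        rw [hmap (ρ.symm j) ⟨(k : ℕ), hk'⟩]
        simp [blockEmb])
  have h2 : σ.symm (blockEmb nn j k) = blockEmb nn (ρ.symm j) ⟨(k : ℕ), hk'⟩ := by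
    rw [← h1, Equiv.symm_apply_apply]
  rw [h2]
  simp [blockEmb]

end Cond

/-- `x_σ` satisfies (a) `x_σ⁻¹·(L ∩ B)·x_σ ⊆ B`,
(b) `x_σ·(L ∩ B)·x_σ⁻¹ ⊆ B` and (c) `x_σ·L·x_σ⁻¹ = L` if and only if `σ` permutes the
blocks of the partition (preserving sizes) in an order-preserving way. -/
theorem weyl_group_of_levi {t : ℕ} (nn : Fin t → ℕ) (hpos : ∀ j, 0 < nn j)
    (σ : Equiv.Perm (Fin (Dsum nn t))) :
    (({M' | ∃ M, memLB p nn M ∧ M' = permMatInv p σ * M * permMat p σ} ⊆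
        {M | memB p M}) ∧
      ({M' | ∃ M, memLB p nn M ∧ M' = permMat p σ * M * permMatInv p σ} ⊆
        {M | memB p M}) ∧
      {M' | ∃ M, memL p nn M ∧ M' = permMat p σ * M * permMatInv p σ} =
        {M | memL p nn M}) ↔
      ∃ ρ : Equiv.Perm (Fin t), (∀ j, nn (ρ j) = nn j) ∧
        ∀ (j : Fin t) (k : Fin (nn j)),
          ((σ (blockEmb nn j k) : ℕ)) = Dsum nn ((ρ j : Fin t) : ℕ) + (k : ℕ) := by
  constructor
  · rintro ⟨-, hb, hc⟩
    -- σ is strictly monotone within each block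
    have hmono : ∀ a b : Fin (Dsum nn t), bfun nn a = bfun nn b → a < b → σ a < σ b := by
      intro a b hblk hab
      have hne : a ≠ b := ne_of_lt hab
      have hB : memB p (permMat p σ * (1 + Matrix.single a b (1:ℚ_[p])) * permMatInv p σ) :=
        hb ⟨_, memLB_one_add p nn a b hab hblk, rfl⟩
      by_contra hlt
      have hne2 : σ a ≠ σ b := fun h => hne (σ.injective h)
      have hba : σ b < σ a := lt_of_le_of_ne (not_lt.mp hlt) (Ne.symm hne2)
      have h0 := hB.2 (σ a) (σ b) hba
      rw [conj_apply] at h0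
      simp only [Equiv.symm_apply_apply] at h0
      rw [one_add_std_apply_same p a b hne] at h0
      exact one_ne_zero h0
    -- σ maps blocks into blocks
    have hfwd : ∀ a b : Fin (Dsum nn t), a ≠ b → bfun nn a = bfun nn b →
        bfun nn (σ a) = bfun nn (σ b) := by
      intro a b hne hblk
      have hL : memL p nn (permMat p σ * (1 + Matrix.single a b (1:ℚ_[p])) * permMatInv p σ) :=
        (Set.ext_iff.mp hc _).mp ⟨_, memL_one_add p nn a b hne hblk, rfl⟩
      by_contra hbl
      have h0 := hL.2 (σ a) (σ b) hbl
      rw [conj_apply] at h0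
      simp only [Equiv.symm_apply_apply] at h0
      rw [one_add_std_apply_same p a b hne] at h0
      exact one_ne_zero h0
    have hbwd : ∀ a b : Fin (Dsum nn t), a ≠ b → bfun nn (σ a) = bfun nn (σ b) →
        bfun nn a = bfun nn b := by
      intro a b hne hblk
      have hne2 : σ a ≠ σ b := fun h => hne (σ.injective h)
      obtain ⟨M'', hM'', heq⟩ :=
        (Set.ext_iff.mp hc _).mpr (memL_one_add p nn (σ a) (σ b) hne2 hblk)
      by_contra hbl
      have h0 : (1 + Matrix.single (σ a) (σ b) (1:ℚ_[p])) (σ a) (σ b) = M'' a b := by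
        rw [heq, conj_apply]
        simp only [Equiv.symm_apply_apply]
      rw [one_add_std_apply_same p (σ a) (σ b) hne2, hM''.2 a b hbl] at h0
      exact one_ne_zero h0
    -- build the permutation of blocks
    choose F K hFK using fun j : Fin t => exists_decomp nn (σ (blockEmb nn j ⟨0, hpos j⟩))
    have hblkmap : ∀ (j : Fin t) (k : Fin (nn j)),
        bfun nn (σ (blockEmb nn j k)) = ((F j : Fin t) : ℕ) := by
      intro j k
      by_cases h : blockEmb nn j k = blockEmb nn j ⟨0, hpos j⟩
      · rw [h, hFK j, bfun_blockEmb]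
      · rw [hfwd _ _ h (by rw [bfun_blockEmb, bfun_blockEmb]), hFK j, bfun_blockEmb]
    have hFinj : Function.Injective F := by
      intro j j' h
      have h1 : bfun nn (σ (blockEmb nn j ⟨0, hpos j⟩)) =
          bfun nn (σ (blockEmb nn j' ⟨0, hpos j'⟩)) := by
        rw [hblkmap j ⟨0, hpos j⟩, hblkmap j' ⟨0, hpos j'⟩, h]
      by_cases he : blockEmb nn j ⟨0, hpos j⟩ = blockEmb nn j' ⟨0, hpos j'⟩
      · have h2 := congrArg (bfun nn) he
        rw [bfun_blockEmb, bfun_blockEmb] at h2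
        exact Fin.ext h2
      · have h2 := hbwd _ _ he h1
        rw [bfun_blockEmb, bfun_blockEmb] at h2
        exact Fin.ext h2
    have hbij : Function.Bijective F := Finite.injective_iff_bijective.mp hFinj
    set ρ : Equiv.Perm (Fin t) := Equiv.ofBijective F hbij with hρdef
    have hρF : ∀ j, ρ j = F j := fun j => rfl
    have hbounds : ∀ (j : Fin t) (k : Fin (nn j)),
        Dsum nn ((F j : Fin t) : ℕ) ≤ (σ (blockEmb nn j k) : ℕ) ∧
          (σ (blockEmb nn j k) : ℕ) < Dsum nn ((F j : Fin t) : ℕ) + nn (F j) := by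
      intro j k
      obtain ⟨j', k', he⟩ := exists_decomp nn (σ (blockEmb nn j k))
      have hj' : (j' : ℕ) = ((F j : Fin t) : ℕ) := by
        rw [← bfun_blockEmb nn j' k', ← he, hblkmap]
      have hj2 : j' = F j := Fin.ext hj'
      subst hj2
      have hv : (σ (blockEmb nn j k) : ℕ) = Dsum nn ((F j : Fin t) : ℕ) + (k' : ℕ) := by
        rw [he]; rfl
      have hk' := k'.isLt
      constructor <;> omega
    have hglem : ∀ j : Fin t, nn j ≤ nn (F j) ∧
        ∀ k : Fin (nn j), nn (F j) = nn j →
          (σ (blockEmb nn j k) : ℕ) = Dsum nn ((F j : Fin t) : ℕ) + (k : ℕ) := by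
      intro j
      set g : ℕ → ℕ := fun k => if h : k < nn j then (σ (blockEmb nn j ⟨k, h⟩) : ℕ) else 0
        with hg
      have hgmono : ∀ k l, k < l → l < nn j → g k < g l := by
        intro k l hkl hl
        have hk : k < nn j := lt_trans hkl hl
        simp only [hg, dif_pos hk, dif_pos hl]
        exact hmono (blockEmb nn j ⟨k, hk⟩) (blockEmb nn j ⟨l, hl⟩)
          (by rw [bfun_blockEmb, bfun_blockEmb])
          (by rw [Fin.lt_def]; simpa [blockEmb] using hkl)
      have hglow : ∀ k, k < nn j → Dsum nn ((F j : Fin t) : ℕ) ≤ g k := by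
        intro k hk; simp only [hg, dif_pos hk]; exact (hbounds j ⟨k, hk⟩).1
      have hghigh : ∀ k, k < nn j → g k < Dsum nn ((F j : Fin t) : ℕ) + nn (F j) := by
        intro k hk; simp only [hg, dif_pos hk]; exact (hbounds j ⟨k, hk⟩).2
      refine ⟨size_le_of_strict (hpos j) g hgmono hglow hghigh, ?_⟩
      intro k hsame
      rw [hsame] at hghigh
      have hsi := strict_interval g hgmono hglow hghigh (k : ℕ) k.isLt
      simpa only [hg, dif_pos k.isLt, Fin.eta] using hsi
    have hle : ∀ j, nn j ≤ nn (F j) := fun j => (hglem j).1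
    have hsum : ∑ j, nn (F j) = ∑ j, nn j := by
      have := Equiv.sum_comp ρ nn
      simp only [hρF] at this
      exact this
    have hsz : ∀ j, nn (F j) = nn j := by
      have := (Finset.sum_eq_sum_iff_of_le (fun i (_ : i ∈ Finset.univ) => hle i)).mp hsum.symm
      exact fun j => (this j (Finset.mem_univ j)).symm
    exact ⟨ρ, fun j => hsz j, fun j k => (hglem j).2 k (hsz j)⟩
  · rintro ⟨ρ, hsz, hmap⟩
    obtain ⟨hsz', hmap'⟩ := cond_symm hsz hmap
    have pres : ∀ a b : Fin (Dsum nn t), bfun nn a = bfun nn b →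
        bfun nn (σ a) = bfun nn (σ b) := cond_pres hsz hmap
    have pres' : ∀ a b : Fin (Dsum nn t), bfun nn a = bfun nn b →
        bfun nn (σ.symm a) = bfun nn (σ.symm b) := cond_pres hsz' hmap'
    have mono : ∀ a b : Fin (Dsum nn t), bfun nn a = bfun nn b → a < b → σ a < σ b :=
      cond_mono hmap
    have mono' : ∀ a b : Fin (Dsum nn t), bfun nn a = bfun nn b → a < b → σ.symm a < σ.symm b :=
      cond_mono hmap'
    have hiff : ∀ a b : Fin (Dsum nn t), bfun nn (σ a) = bfun nn (σ b) →
        bfun nn a = bfun nn b := by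
      intro a b h
      have := pres' _ _ h
      simpa using this
    have hiff' : ∀ a b : Fin (Dsum nn t), bfun nn (σ.symm a) = bfun nn (σ.symm b) →
        bfun nn a = bfun nn b := by
      intro a b h
      have := pres _ _ h
      simpa using this
    refine ⟨?_, ?_, ?_⟩
    · rintro M' ⟨M, hM, rfl⟩
      refine ⟨((isUnit_permMatInv p σ).mul hM.1).mul (isUnit_permMat p σ), ?_⟩
      intro k l hlk
      rw [conjInv_apply]
      by_cases h : bfun nn (σ k) = bfun nn (σ l)
      · exact hM.2.2 _ _ (mono l k (hiff _ _ h).symm hlk)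
      · exact hM.2.1 _ _ h
    · rintro M' ⟨M, hM, rfl⟩
      refine ⟨((isUnit_permMat p σ).mul hM.1).mul (isUnit_permMatInv p σ), ?_⟩
      intro k l hlk
      rw [conj_apply]
      by_cases h : bfun nn (σ.symm k) = bfun nn (σ.symm l)
      · exact hM.2.2 _ _ (mono' l k (hiff' _ _ h).symm hlk)
      · exact hM.2.1 _ _ h
    · ext M'
      simp only [Set.mem_setOf_eq]
      constructor
      · rintro ⟨M, hM, rfl⟩
        refine ⟨((isUnit_permMat p σ).mul hM.1).mul (isUnit_permMatInv p σ), ?_⟩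
        intro k l h
        rw [conj_apply]
        exact hM.2 _ _ fun hcc => h (hiff' _ _ hcc)
      · intro hM'
        refine ⟨permMatInv p σ * M' * permMat p σ,
          ⟨((isUnit_permMatInv p σ).mul hM'.1).mul (isUnit_permMat p σ), ?_⟩, ?_⟩
        · intro k l h
          rw [conjInv_apply]
          exact hM'.2 _ _ fun hcc => h (hiff _ _ hcc)
        · have hassoc : permMat p σ * (permMatInv p σ * M' * permMat p σ) * permMatInv p σ
              = permMat p σ * permMatInv p σ * M' * (permMat p σ * permMatInv p σ) := by
            noncomm_ring
          rw [hassoc, permMat_mul_permMatInv, one_mul, mul_one]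


end PIw
end
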